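/- Suppose W ≥ 0 satisfies the fixed-point equation W = ∑_{j≥1} T_j^α W_j in distribution, where (W_j) are i.i.d. copies of W independent of T = (T_j). If Y₁, Y₂, … are i.i.d. S_α(σ, β, 0)-stable random variables (α ∈ (0,2)\{1}) independent of everything else, then X := W^{1/α} Y (with Y independent of W) satisfies X = ∑_{j≥1} T_j X_j in distribution, where X_j are i.i.d. copies of X independent of T. -/

import Mathlib

open MeasureTheory ProbabilityTheory Complex Real

noncomputable def lapl {Ω : Type*} [MeasurableSpace Ω] (μ : Measure Ω) (W : Ω → ℝ) (z : ℂ) : ℂ :=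
  ∫ ω, Complex.exp (-(z * W ω)) ∂μ

noncomputable def laplD {Ω : Type*} [MeasurableSpace Ω] (μ : Measure Ω) (W : Ω → ℝ) (z : ℂ) : ℂ :=
  ∫ ω, -(W ω : ℂ) * Complex.exp (-(z * W ω)) ∂μ

section basics
variable {Ω : Type*} [MeasurableSpace Ω] (μ : Measure Ω) [IsProbabilityMeasure μ]
  {W : Ω → ℝ}

lemma norm_exp_neg_le_one {z : ℂ} (hz : 0 ≤ z.re) {w : ℝ} (hw : 0 ≤ w) :
    ‖Complex.exp (-(z * w))‖ ≤ 1 := by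
  rw [Complex.norm_exp]
  have : (-(z * (w:ℂ))).re = -(z.re * w) := by simp [Complex.mul_re]
  rw [this]
  exact Real.exp_le_one_iff.2 (neg_nonpos.2 (mul_nonneg hz hw))

lemma integrable_exp_neg (hWmeas : Measurable W) (hWnonneg : ∀ ω, 0 ≤ W ω)
    {z : ℂ} (hz : 0 ≤ z.re) :
    Integrable (fun ω => Complex.exp (-(z * W ω))) μ := by
  apply Integrable.mono' (integrable_const (1:ℝ))
  · exact (Complex.measurable_exp.comp ((measurable_const.mul
      (Complex.measurable_ofReal.comp hWmeas)).neg)).aestronglyMeasurable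
  · exact Filter.Eventually.of_forall fun ω => norm_exp_neg_le_one hz (hWnonneg ω)

lemma norm_lapl_le_one (hWnonneg : ∀ ω, 0 ≤ W ω) {z : ℂ} (hz : 0 ≤ z.re) :
    ‖lapl μ W z‖ ≤ 1 := by
  refine (norm_integral_le_integral_norm _).trans ?_
  calc ∫ ω, ‖Complex.exp (-(z * W ω))‖ ∂μ ≤ ∫ _, (1:ℝ) ∂μ := by
        apply integral_mono_of_nonneg (Filter.Eventually.of_forall fun ω => norm_nonneg _)
          (integrable_const 1)
        exact Filter.Eventually.of_forall fun ω => norm_exp_neg_le_one hz (hWnonneg ω)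
    _ = 1 := by simp

lemma lapl_zero : lapl μ W 0 = 1 := by simp [lapl]

lemma lapl_ofReal (s : ℝ) :
    lapl μ W (s : ℂ) = ((∫ ω, Real.exp (-(s * W ω)) ∂μ : ℝ) : ℂ) := by
  have h : ∀ ω, Complex.exp (-((s:ℂ) * (W ω : ℝ))) = ((Real.exp (-(s * W ω)) : ℝ) : ℂ) := by
    intro ω; rw [Complex.ofReal_exp]; push_cast; ring_nf
  rw [lapl]
  simp_rw [h]
  exact integral_ofReal

end basics

set_option linter.unusedSectionVars false

section deriv
variable {Ω : Type*} [MeasurableSpace Ω] (μ : Measure Ω) [IsProbabilityMeasure μ]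
  {W : Ω → ℝ}

noncomputable def laplD' {Ω : Type*} [MeasurableSpace Ω] (μ : Measure Ω) (W : Ω → ℝ) (z : ℂ) : ℂ :=
  ∫ ω, Complex.exp (-(z * W ω)) * -(W ω : ℂ) ∂μ

lemma mul_exp_neg_le (r w : ℝ) (hr : 0 < r) (hw : 0 ≤ w) :
    w * Real.exp (-(r * w)) ≤ 1 / r := by
  have key : w * Real.exp (-(r*w)) * r ≤ 1 := by
    have h1 : (r * w) * Real.exp (-(r*w)) ≤ Real.exp (r*w) * Real.exp (-(r*w)) := by
      apply mul_le_mul_of_nonneg_right _ (Real.exp_nonneg _)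
      have := Real.add_one_le_exp (r*w); linarith
    rw [← Real.exp_add] at h1
    simp only [add_neg_cancel, Real.exp_zero] at h1
    nlinarith
  rw [le_div_iff₀ hr]
  exact key

lemma norm_exp_mul_neg_le {z : ℂ} {r : ℝ} (hr : 0 < r) (hz : r ≤ z.re) {w : ℝ} (hw : 0 ≤ w) :
    ‖Complex.exp (-(z * w)) * -(w : ℂ)‖ ≤ 1 / r := by
  rw [norm_mul, norm_neg, Complex.norm_exp,
    Complex.norm_of_nonneg hw]
  have hre : (-(z * (w:ℂ))).re = -(z.re * w) := by simp [Complex.mul_re]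
  rw [hre]
  calc Real.exp (-(z.re * w)) * w ≤ Real.exp (-(r * w)) * w := by
        apply mul_le_mul_of_nonneg_right _ hw
        apply Real.exp_le_exp.2
        have : r * w ≤ z.re * w := mul_le_mul_of_nonneg_right hz hw
        linarith
    _ = w * Real.exp (-(r*w)) := mul_comm _ _
    _ ≤ 1 / r := mul_exp_neg_le r w hr hw

lemma hasDerivAt_exp_neg (w : ℝ) (x : ℂ) :
    HasDerivAt (fun z : ℂ => Complex.exp (-(z * w))) (Complex.exp (-(x * w)) * -(w : ℂ)) x := by
  have h1 : HasDerivAt (fun z : ℂ => -(z * (w:ℂ))) (-(w:ℂ)) x :=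
    ((hasDerivAt_id x).mul_const (w:ℂ)).neg.congr_deriv (by simp)
  exact h1.cexp

lemma hasDerivAt_lapl (hWmeas : Measurable W) (hWnonneg : ∀ ω, 0 ≤ W ω)
    {z : ℂ} (hz : 0 < z.re) :
    HasDerivAt (lapl μ W) (laplD' μ W z) z := by
  have hmeasC : Measurable fun ω => (W ω : ℂ) := Complex.measurable_ofReal.comp hWmeas
  have hhalf : 0 < z.re / 2 := by linarith
  have key := hasDerivAt_integral_of_dominated_loc_of_deriv_le (μ := μ)
      (F := fun x ω => Complex.exp (-(x * W ω)))
      (F' := fun x ω => Complex.exp (-(x * W ω)) * -(W ω : ℂ))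
      (x₀ := z) (bound := fun _ => 2 / z.re) (s := Metric.ball z (z.re / 2)) (Metric.ball_mem_nhds z hhalf)
      (Filter.Eventually.of_forall fun x =>
        (Complex.measurable_exp.comp ((measurable_const.mul hmeasC).neg)).aestronglyMeasurable)
      (integrable_exp_neg μ hWmeas hWnonneg hz.le)
      (((Complex.measurable_exp.comp ((measurable_const.mul hmeasC).neg)).mul
        hmeasC.neg).aestronglyMeasurable)
      ?_ (integrable_const _) ?_
  · exact key.2
  · apply Filter.Eventually.of_forall
    intro ω x hx
    have hxre : z.re / 2 ≤ x.re := by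
      have := Complex.abs_re_le_norm (x - z)
      have hd : ‖x - z‖ < z.re / 2 := by
        simpa [Metric.mem_ball, Complex.dist_eq] using hx
      have : |x.re - z.re| < z.re/2 := by
        calc |x.re - z.re| = |(x - z).re| := by simp [Complex.sub_re]
          _ ≤ ‖x - z‖ := Complex.abs_re_le_norm _
          _ < z.re/2 := hd
      have := abs_lt.1 this
      linarith [this.1]
    have h2 : (2:ℝ)/z.re = 1/(z.re/2) := by field_simp
    rw [h2]
    exact norm_exp_mul_neg_le hhalf hxre (hWnonneg ω)
  · exact Filter.Eventually.of_forall fun ω x _ => hasDerivAt_exp_neg (W ω) x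

lemma norm_laplD'_le (hWnonneg : ∀ ω, 0 ≤ W ω) {z : ℂ} (hz : 0 < z.re) :
    ‖laplD' μ W z‖ ≤ 1 / z.re := by
  refine (norm_integral_le_integral_norm _).trans ?_
  calc ∫ ω, ‖Complex.exp (-(z * W ω)) * -(W ω : ℂ)‖ ∂μ ≤ ∫ _, 1/z.re ∂μ := by
        apply integral_mono_of_nonneg (Filter.Eventually.of_forall fun ω => norm_nonneg _)
          (integrable_const _)
        exact Filter.Eventually.of_forall fun ω =>
          norm_exp_mul_neg_le hz le_rfl (hWnonneg ω)
    _ = 1/z.re := by simp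

lemma stronglyMeasurable_lapl (hWmeas : Measurable W) [SFinite μ] :
    StronglyMeasurable (lapl μ W) := by
  have : StronglyMeasurable fun p : ℂ × Ω => Complex.exp (-(p.1 * W p.2)) := by
    apply Measurable.stronglyMeasurable
    exact Complex.measurable_exp.comp
      ((measurable_fst.mul ((Complex.measurable_ofReal.comp hWmeas).comp measurable_snd)).neg)
  exact this.integral_prod_right'

lemma stronglyMeasurable_laplD' (hWmeas : Measurable W) [SFinite μ] :
    StronglyMeasurable (laplD' μ W) := by
  have : StronglyMeasurable fun p : ℂ × Ω => Complex.exp (-(p.1 * W p.2)) * -(W p.2 : ℂ) := by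
    apply Measurable.stronglyMeasurable
    exact (Complex.measurable_exp.comp
      ((measurable_fst.mul ((Complex.measurable_ofReal.comp hWmeas).comp measurable_snd)).neg)).mul
      ((Complex.measurable_ofReal.comp hWmeas).comp measurable_snd).neg
  exact this.integral_prod_right'

end deriv

section key
variable {Ω : Type*} [MeasurableSpace Ω] (μ : Measure Ω) [IsProbabilityMeasure μ]
  {Θ : Type*} [MeasurableSpace Θ] (ν : Measure Θ) [IsProbabilityMeasure ν]

/-- the factor `F((T j θ)^α z)` -/
noncomputable def lfac (W : Ω → ℝ) (T : ℕ → Θ → ℝ) (α : ℝ) (z : ℂ) (θ : Θ) (j : ℕ) : ℂ :=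
  lapl μ W (((T j θ ^ α : ℝ) : ℂ) * z)

noncomputable def lP (W : Ω → ℝ) (T : ℕ → Θ → ℝ) (α : ℝ) (z : ℂ) (θ : Θ) : ℂ :=
  ∏' j : ℕ, lfac μ W T α z θ j

noncomputable def lPn (W : Ω → ℝ) (T : ℕ → Θ → ℝ) (α : ℝ) (n : ℕ) (z : ℂ) (θ : Θ) : ℂ :=
  ∏ j ∈ Finset.range n, lfac μ W T α z θ j

variable {W : Ω → ℝ} {T : ℕ → Θ → ℝ} {α : ℝ}

lemma re_ofReal_mul' (c : ℝ) (z : ℂ) : (((c:ℂ)) * z).re = c * z.re := by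
  simp [Complex.mul_re]

lemma lfac_one (hTnonneg : ∀ j θ, 0 ≤ T j θ) (hα0 : 0 < α) {j : ℕ} {θ : Θ}
    (h : ¬ 0 < T j θ) (z : ℂ) : lfac μ W T α z θ j = 1 := by
  have h0 : T j θ = 0 := le_antisymm (not_lt.1 h) (hTnonneg j θ)
  rw [lfac, h0, Real.zero_rpow hα0.ne']
  simp [lapl_zero]

lemma lfac_norm_le (hWnonneg : ∀ ω, 0 ≤ W ω) (hTnonneg : ∀ j θ, 0 ≤ T j θ)
    (j : ℕ) (θ : Θ) {z : ℂ} (hz : 0 ≤ z.re) : ‖lfac μ W T α z θ j‖ ≤ 1 := by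
  apply norm_lapl_le_one μ hWnonneg
  rw [re_ofReal_mul']
  exact mul_nonneg (Real.rpow_nonneg (hTnonneg j θ) α) hz

lemma lfac_measurable (hWmeas : Measurable W) (hTmeas : ∀ j, Measurable (T j)) (j : ℕ) (z : ℂ) :
    Measurable (fun θ => lfac μ W T α z θ j) := by
  have h1 : Measurable fun θ => ((T j θ ^ α : ℝ) : ℂ) * z :=
    (Complex.measurable_ofReal.comp ((hTmeas j).pow_const α)).mul_const z
  exact (stronglyMeasurable_lapl μ hWmeas).measurable.comp h1

lemma lPn_measurable (hWmeas : Measurable W) (hTmeas : ∀ j, Measurable (T j)) (n : ℕ) (z : ℂ) :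
    Measurable (fun θ => lPn μ W T α n z θ) :=
  Finset.measurable_prod _ fun j _ => lfac_measurable μ hWmeas hTmeas j z

lemma lPn_norm_le (hWnonneg : ∀ ω, 0 ≤ W ω) (hTnonneg : ∀ j θ, 0 ≤ T j θ)
    (n : ℕ) (θ : Θ) {z : ℂ} (hz : 0 ≤ z.re) : ‖lPn μ W T α n z θ‖ ≤ 1 := by
  calc ‖lPn μ W T α n z θ‖ ≤ ∏ j ∈ Finset.range n, ‖lfac μ W T α z θ j‖ := Finset.norm_prod_le _ _
    _ ≤ ∏ j ∈ Finset.range n, 1 :=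
        Finset.prod_le_prod (fun j _ => norm_nonneg _)
          (fun j _ => lfac_norm_le μ hWnonneg hTnonneg j θ hz)
    _ = 1 := by simp

lemma lP_eq_prod (hTnonneg : ∀ j θ, 0 ≤ T j θ) (hα0 : 0 < α) {θ : Θ}
    (hθ : {j | 0 < T j θ}.Finite) (z : ℂ) :
    lP μ W T α z θ = ∏ j ∈ hθ.toFinset, lfac μ W T α z θ j := by
  apply tprod_eq_prod
  intro j hj
  rw [Set.Finite.mem_toFinset] at hj
  exact lfac_one μ hTnonneg hα0 hj z

lemma lP_eq_lPn (hTnonneg : ∀ j θ, 0 ≤ T j θ) (hα0 : 0 < α) {θ : Θ} {n : ℕ}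
    (hθ : ∀ j, n ≤ j → ¬ 0 < T j θ) (z : ℂ) :
    lP μ W T α z θ = lPn μ W T α n z θ := by
  apply tprod_eq_prod
  intro j hj
  simp only [Finset.mem_range, not_lt] at hj
  exact lfac_one μ hTnonneg hα0 (hθ j hj) z

lemma lP_norm_le (hWnonneg : ∀ ω, 0 ≤ W ω) (hTnonneg : ∀ j θ, 0 ≤ T j θ) (hα0 : 0 < α)
    {θ : Θ} (hθ : {j | 0 < T j θ}.Finite) {z : ℂ} (hz : 0 ≤ z.re) :
    ‖lP μ W T α z θ‖ ≤ 1 := by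
  rw [lP_eq_prod μ hTnonneg hα0 hθ z]
  calc ‖∏ j ∈ hθ.toFinset, lfac μ W T α z θ j‖
      ≤ ∏ j ∈ hθ.toFinset, ‖lfac μ W T α z θ j‖ := Finset.norm_prod_le _ _
    _ ≤ ∏ j ∈ hθ.toFinset, 1 :=
        Finset.prod_le_prod (fun j _ => norm_nonneg _)
          (fun j _ => lfac_norm_le μ hWnonneg hTnonneg j θ hz)
    _ = 1 := by simp

lemma lP_tendsto (hTnonneg : ∀ j θ, 0 ≤ T j θ) (hα0 : 0 < α) {θ : Θ}
    (hθ : {j | 0 < T j θ}.Finite) (z : ℂ) :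
    Filter.Tendsto (fun n => lPn μ W T α n z θ) Filter.atTop (nhds (lP μ W T α z θ)) := by
  obtain ⟨N, hN⟩ := Finset.exists_nat_subset_range hθ.toFinset
  apply tendsto_atTop_of_eventually_const (i₀ := N)
  intro n hn
  rw [← lP_eq_lPn μ hTnonneg hα0]
  intro j hj hpos
  have : j ∈ Finset.range N := hN (hθ.mem_toFinset.2 hpos)
  simp only [Finset.mem_range] at this
  omega

lemma lP_aestronglyMeasurable (hWmeas : Measurable W) (hTmeas : ∀ j, Measurable (T j))
    (hTnonneg : ∀ j θ, 0 ≤ T j θ) (hα0 : 0 < α)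
    (hfin : ∀ᵐ θ ∂ν, {j | 0 < T j θ}.Finite) (z : ℂ) :
    AEStronglyMeasurable (fun θ => lP μ W T α z θ) ν := by
  apply aestronglyMeasurable_of_tendsto_ae (u := Filter.atTop)
    (f := fun n θ => lPn μ W T α n z θ)
  · exact fun n => (lPn_measurable μ hWmeas hTmeas n z).aestronglyMeasurable
  · filter_upwards [hfin] with θ hθ using lP_tendsto μ hTnonneg hα0 hθ z

lemma lP_integrable (hWmeas : Measurable W) (hTmeas : ∀ j, Measurable (T j))
    (hTnonneg : ∀ j θ, 0 ≤ T j θ) (hWnonneg : ∀ ω, 0 ≤ W ω) (hα0 : 0 < α)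
    (hfin : ∀ᵐ θ ∂ν, {j | 0 < T j θ}.Finite) {z : ℂ} (hz : 0 ≤ z.re) :
    Integrable (fun θ => lP μ W T α z θ) ν := by
  apply Integrable.mono' (integrable_const (1:ℝ))
    (lP_aestronglyMeasurable μ ν hWmeas hTmeas hTnonneg hα0 hfin z)
  filter_upwards [hfin] with θ hθ using lP_norm_le μ hWnonneg hTnonneg hα0 hθ hz

lemma lPn_integrable (hWmeas : Measurable W) (hTmeas : ∀ j, Measurable (T j))
    (hTnonneg : ∀ j θ, 0 ≤ T j θ) (hWnonneg : ∀ ω, 0 ≤ W ω)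
    (n : ℕ) {z : ℂ} (hz : 0 ≤ z.re) :
    Integrable (fun θ => lPn μ W T α n z θ) ν := by
  apply Integrable.mono' (integrable_const (1:ℝ))
    (lPn_measurable μ hWmeas hTmeas n z).aestronglyMeasurable
  exact Filter.Eventually.of_forall fun θ => lPn_norm_le μ hWnonneg hTnonneg n θ hz

end key

section key2
variable {Ω : Type*} [MeasurableSpace Ω] (μ : Measure Ω) [IsProbabilityMeasure μ]
  {Θ : Type*} [MeasurableSpace Θ] (ν : Measure Θ) [IsProbabilityMeasure ν]

lemma re_lower_of_mem_ball {z x : ℂ} (hx : x ∈ Metric.ball z (z.re / 2)) :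
    z.re / 2 ≤ x.re := by
  have hd : ‖x - z‖ < z.re / 2 := by
    simpa [Metric.mem_ball, Complex.dist_eq] using hx
  have h1 : |x.re - z.re| < z.re/2 := by
    calc |x.re - z.re| = |(x - z).re| := by simp [Complex.sub_re]
      _ ≤ ‖x - z‖ := Complex.abs_re_le_norm _
      _ < z.re/2 := hd
  have := (abs_lt.1 h1).1
  linarith

variable {W : Ω → ℝ} {T : ℕ → Θ → ℝ} {α : ℝ}

/-- derivative of the factor -/
noncomputable def lfacD (W : Ω → ℝ) (T : ℕ → Θ → ℝ) (α : ℝ) (z : ℂ) (θ : Θ) (j : ℕ) : ℂ :=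
  laplD' μ W (((T j θ ^ α : ℝ) : ℂ) * z) * ((T j θ ^ α : ℝ) : ℂ)

noncomputable def lPnD (W : Ω → ℝ) (T : ℕ → Θ → ℝ) (α : ℝ) (n : ℕ) (z : ℂ) (θ : Θ) : ℂ :=
  ∑ j ∈ Finset.range n,
    (∏ k ∈ (Finset.range n).erase j, lfac μ W T α z θ k) • lfacD μ W T α z θ j

lemma lfac_hasDerivAt (hWmeas : Measurable W) (hWnonneg : ∀ ω, 0 ≤ W ω)
    (hTnonneg : ∀ j θ, 0 ≤ T j θ) (hα0 : 0 < α) (j : ℕ) (θ : Θ) {z : ℂ} (hz : 0 < z.re) :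
    HasDerivAt (fun x => lfac μ W T α x θ j) (lfacD μ W T α z θ j) z := by
  rcases eq_or_lt_of_le (hTnonneg j θ) with h0 | hpos
  · have hc : (T j θ : ℝ) ^ α = 0 := by rw [← h0, Real.zero_rpow hα0.ne']
    have he : (fun x => lfac μ W T α x θ j) = fun _ => lapl μ W 0 := by
      funext x; rw [lfac, hc]; norm_num
    have hD : lfacD μ W T α z θ j = 0 := by rw [lfacD, hc]; simp
    rw [he, hD]
    exact hasDerivAt_const z _
  · have hc : (0:ℝ) < T j θ ^ α := Real.rpow_pos_of_pos hpos α
    have hre : 0 < ((((T j θ ^ α : ℝ)) : ℂ) * z).re := by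
      rw [re_ofReal_mul']; exact mul_pos hc hz
    have h1 : HasDerivAt (lapl μ W) (laplD' μ W (((T j θ ^ α : ℝ) : ℂ) * z))
        (((T j θ ^ α : ℝ) : ℂ) * z) := hasDerivAt_lapl μ hWmeas hWnonneg hre
    have h2 : HasDerivAt (fun x : ℂ => ((T j θ ^ α : ℝ) : ℂ) * x) ((T j θ ^ α : ℝ) : ℂ) z := by
      simpa using (hasDerivAt_id z).const_mul ((T j θ ^ α : ℝ) : ℂ)
    exact h1.comp z h2

lemma lfacD_norm_le (hWnonneg : ∀ ω, 0 ≤ W ω) (hTnonneg : ∀ j θ, 0 ≤ T j θ)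
    (j : ℕ) (θ : Θ) {z : ℂ} (hz : 0 < z.re) : ‖lfacD μ W T α z θ j‖ ≤ 1 / z.re := by
  rcases eq_or_lt_of_le (Real.rpow_nonneg (hTnonneg j θ) α) with h0 | hc
  · rw [lfacD, ← h0]
    simp only [Complex.ofReal_zero, mul_zero, norm_zero]
    positivity
  · rw [lfacD, norm_mul, Complex.norm_of_nonneg (le_of_lt hc)]
    have hre : (((T j θ ^ α : ℝ) : ℂ) * z).re = (T j θ ^ α) * z.re := re_ofReal_mul' _ _
    have h1 : ‖laplD' μ W (((T j θ ^ α : ℝ) : ℂ) * z)‖ ≤ 1 / ((T j θ ^ α) * z.re) := by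
      have := norm_laplD'_le μ hWnonneg (z := (((T j θ ^ α : ℝ) : ℂ) * z))
        (by rw [hre]; exact mul_pos hc hz)
      rwa [hre] at this
    calc ‖laplD' μ W (((T j θ ^ α : ℝ) : ℂ) * z)‖ * (T j θ ^ α)
        ≤ (1 / ((T j θ ^ α) * z.re)) * (T j θ ^ α) :=
          mul_le_mul_of_nonneg_right h1 (le_of_lt hc)
      _ = 1 / z.re := by field_simp

lemma lPn_hasDerivAt (hWmeas : Measurable W) (hWnonneg : ∀ ω, 0 ≤ W ω)
    (hTnonneg : ∀ j θ, 0 ≤ T j θ) (hα0 : 0 < α) (n : ℕ) (θ : Θ) {z : ℂ} (hz : 0 < z.re) :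
    HasDerivAt (fun x => lPn μ W T α n x θ) (lPnD μ W T α n z θ) z := by
  exact HasDerivAt.fun_finsetProd (u := Finset.range n) fun j _ =>
    lfac_hasDerivAt μ hWmeas hWnonneg hTnonneg hα0 j θ hz

lemma lPnD_norm_le (hWnonneg : ∀ ω, 0 ≤ W ω) (hTnonneg : ∀ j θ, 0 ≤ T j θ)
    (n : ℕ) (θ : Θ) {z : ℂ} (hz : 0 < z.re) :
    ‖lPnD μ W T α n z θ‖ ≤ n * (1 / z.re) := by
  calc ‖lPnD μ W T α n z θ‖
      ≤ ∑ j ∈ Finset.range n,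
          ‖(∏ k ∈ (Finset.range n).erase j, lfac μ W T α z θ k) • lfacD μ W T α z θ j‖ :=
        norm_sum_le _ _
    _ ≤ ∑ j ∈ Finset.range n, 1 / z.re := by
        apply Finset.sum_le_sum
        intro j _
        rw [smul_eq_mul, norm_mul]
        calc ‖∏ k ∈ (Finset.range n).erase j, lfac μ W T α z θ k‖ * ‖lfacD μ W T α z θ j‖
            ≤ 1 * (1 / z.re) := by
              apply mul_le_mul _ (lfacD_norm_le μ hWnonneg hTnonneg j θ hz) (norm_nonneg _)
                zero_le_one
              calc ‖∏ k ∈ (Finset.range n).erase j, lfac μ W T α z θ k‖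
                  ≤ ∏ k ∈ (Finset.range n).erase j, ‖lfac μ W T α z θ k‖ :=
                    Finset.norm_prod_le _ _
                _ ≤ ∏ k ∈ (Finset.range n).erase j, 1 :=
                    Finset.prod_le_prod (fun k _ => norm_nonneg _)
                      (fun k _ => lfac_norm_le μ hWnonneg hTnonneg k θ hz.le)
                _ = 1 := by simp
          _ = 1 / z.re := one_mul _
    _ = n * (1 / z.re) := by simp [Finset.sum_const, Finset.card_range, mul_one_div]

lemma lfacD_measurable (hWmeas : Measurable W) (hTmeas : ∀ j, Measurable (T j)) (j : ℕ) (z : ℂ) :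
    Measurable (fun θ => lfacD μ W T α z θ j) := by
  have h1 : Measurable fun θ => ((T j θ ^ α : ℝ) : ℂ) :=
    Complex.measurable_ofReal.comp ((hTmeas j).pow_const α)
  exact ((stronglyMeasurable_laplD' μ hWmeas).measurable.comp (h1.mul_const z)).mul h1

lemma lPnD_measurable (hWmeas : Measurable W) (hTmeas : ∀ j, Measurable (T j)) (n : ℕ) (z : ℂ) :
    Measurable (fun θ => lPnD μ W T α n z θ) := by
  apply Finset.measurable_sum
  intro j _
  exact (Finset.measurable_prod _ fun k _ => lfac_measurable μ hWmeas hTmeas k z).smul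
    (lfacD_measurable μ hWmeas hTmeas j z)

lemma lGn_hasDerivAt (hWmeas : Measurable W) (hWnonneg : ∀ ω, 0 ≤ W ω)
    (hTmeas : ∀ j, Measurable (T j)) (hTnonneg : ∀ j θ, 0 ≤ T j θ) (hα0 : 0 < α)
    (n : ℕ) {z : ℂ} (hz : 0 < z.re) :
    HasDerivAt (fun x => ∫ θ, lPn μ W T α n x θ ∂ν) (∫ θ, lPnD μ W T α n z θ ∂ν) z := by
  have hhalf : 0 < z.re / 2 := by linarith
  have key := hasDerivAt_integral_of_dominated_loc_of_deriv_le (μ := ν)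
      (F := fun x θ => lPn μ W T α n x θ)
      (F' := fun x θ => lPnD μ W T α n x θ)
      (x₀ := z) (bound := fun _ => n * (2 / z.re)) (s := Metric.ball z (z.re / 2)) (Metric.ball_mem_nhds z hhalf)
      (Filter.Eventually.of_forall fun x =>
        (lPn_measurable μ hWmeas hTmeas n x).aestronglyMeasurable)
      (lPn_integrable μ ν hWmeas hTmeas hTnonneg hWnonneg n hz.le)
      (lPnD_measurable μ hWmeas hTmeas n z).aestronglyMeasurable
      ?_ (integrable_const _) ?_
  · exact key.2
  · apply Filter.Eventually.of_forall
    intro θ x hx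
    have hxre : z.re / 2 ≤ x.re := re_lower_of_mem_ball hx
    have hxpos : 0 < x.re := lt_of_lt_of_le hhalf hxre
    calc ‖lPnD μ W T α n x θ‖ ≤ n * (1 / x.re) :=
          lPnD_norm_le μ hWnonneg hTnonneg n θ hxpos
      _ ≤ n * (2 / z.re) := by
          apply mul_le_mul_of_nonneg_left _ (Nat.cast_nonneg n)
          rw [div_le_div_iff₀ hxpos (by linarith : (0:ℝ) < z.re)]
          linarith
  · apply Filter.Eventually.of_forall
    intro θ x hx
    have hxpos : 0 < x.re := lt_of_lt_of_le hhalf (re_lower_of_mem_ball hx)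
    exact lPn_hasDerivAt μ hWmeas hWnonneg hTnonneg hα0 n θ hxpos

end key2

section key3
variable {Ω : Type*} [MeasurableSpace Ω] (μ : Measure Ω) [IsProbabilityMeasure μ]
  {Θ : Type*} [MeasurableSpace Θ] (ν : Measure Θ) [IsProbabilityMeasure ν]
  {W : Ω → ℝ} {T : ℕ → Θ → ℝ} {α : ℝ}

/-- the bad set where some `T j θ`, `j ≥ n`, is positive -/
def lBad (T : ℕ → Θ → ℝ) (n : ℕ) : Set Θ := {θ | ∃ j, n ≤ j ∧ 0 < T j θ}

lemma lBad_measurable (hTmeas : ∀ j, Measurable (T j)) (n : ℕ) :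
    MeasurableSet (lBad T n) := by
  have : lBad T n = ⋃ j, {θ | n ≤ j ∧ 0 < T j θ} := by
    ext θ; simp [lBad]
  rw [this]
  exact MeasurableSet.iUnion fun j => (MeasurableSet.const _).inter
    (measurableSet_lt measurable_const (hTmeas j))

lemma lBad_antitone : Antitone (lBad T) := by
  intro m n hmn θ hθ
  obtain ⟨j, hj, hpos⟩ := hθ
  exact ⟨j, le_trans hmn hj, hpos⟩

lemma lBad_tendsto_zero (hTmeas : ∀ j, Measurable (T j))
    (hfin : ∀ᵐ θ ∂ν, {j | 0 < T j θ}.Finite) :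
    Filter.Tendsto (fun n => (ν (lBad T n)).toReal) Filter.atTop (nhds 0) := by
  have hnull : ν (⋂ n, lBad T n) = 0 := by
    apply measure_mono_null (t := {θ | ¬ {j | 0 < T j θ}.Finite})
    · intro θ hθ
      simp only [Set.mem_iInter] at hθ
      intro hFin
      obtain ⟨N, hN⟩ := Finset.exists_nat_subset_range hFin.toFinset
      obtain ⟨j, hj, hpos⟩ := hθ N
      have : j ∈ Finset.range N := hN (hFin.mem_toFinset.2 hpos)
      simp only [Finset.mem_range] at this
      omega
    · have := hfin
      rw [MeasureTheory.ae_iff] at this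
      convert this using 2
  have h1 : Filter.Tendsto (ν ∘ lBad T) Filter.atTop (nhds (ν (⋂ n, lBad T n))) := by
    apply tendsto_measure_iInter_atTop
      (fun n => (lBad_measurable hTmeas n).nullMeasurableSet) lBad_antitone
    exact ⟨0, measure_ne_top ν _⟩
  rw [hnull] at h1
  have h2 := (ENNReal.tendsto_toReal (by simp : (0:ENNReal) ≠ ⊤)).comp h1
  exact h2

lemma lG_sub_lGn_norm_le (hWmeas : Measurable W) (hWnonneg : ∀ ω, 0 ≤ W ω)
    (hTmeas : ∀ j, Measurable (T j)) (hTnonneg : ∀ j θ, 0 ≤ T j θ) (hα0 : 0 < α)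
    (hfin : ∀ᵐ θ ∂ν, {j | 0 < T j θ}.Finite) (n : ℕ) {z : ℂ} (hz : 0 ≤ z.re) :
    ‖(∫ θ, lP μ W T α z θ ∂ν) - ∫ θ, lPn μ W T α n z θ ∂ν‖
      ≤ 2 * (ν (lBad T n)).toReal := by
  rw [← integral_sub (lP_integrable μ ν hWmeas hTmeas hTnonneg hWnonneg hα0 hfin hz)
    (lPn_integrable μ ν hWmeas hTmeas hTnonneg hWnonneg n hz)]
  have hg : Integrable ((lBad T n).indicator (fun _ => (2:ℝ))) ν :=
    (integrable_const (2:ℝ)).indicator (lBad_measurable hTmeas n)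
  calc ‖∫ θ, (lP μ W T α z θ - lPn μ W T α n z θ) ∂ν‖
      ≤ ∫ θ, (lBad T n).indicator (fun _ => (2:ℝ)) θ ∂ν := by
        apply norm_integral_le_of_norm_le hg
        filter_upwards [hfin] with θ hθ
        by_cases hmem : θ ∈ lBad T n
        · rw [Set.indicator_of_mem hmem]
          calc ‖lP μ W T α z θ - lPn μ W T α n z θ‖
              ≤ ‖lP μ W T α z θ‖ + ‖lPn μ W T α n z θ‖ := norm_sub_le _ _
            _ ≤ 1 + 1 := add_le_add (lP_norm_le μ hWnonneg hTnonneg hα0 hθ hz)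
                (lPn_norm_le μ hWnonneg hTnonneg n θ hz)
            _ = 2 := by norm_num
        · rw [Set.indicator_of_notMem hmem]
          have : lP μ W T α z θ = lPn μ W T α n z θ := by
            apply lP_eq_lPn μ hTnonneg hα0
            intro j hj hpos
            exact hmem ⟨j, hj, hpos⟩
          rw [this, sub_self, norm_zero]
    _ = 2 * (ν (lBad T n)).toReal := by
        rw [integral_indicator (lBad_measurable hTmeas n)]
        simp [Measure.restrict_apply_univ, mul_comm]
        rfl

lemma lG_tendstoUniformlyOn (hWmeas : Measurable W) (hWnonneg : ∀ ω, 0 ≤ W ω)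
    (hTmeas : ∀ j, Measurable (T j)) (hTnonneg : ∀ j θ, 0 ≤ T j θ) (hα0 : 0 < α)
    (hfin : ∀ᵐ θ ∂ν, {j | 0 < T j θ}.Finite) :
    TendstoUniformlyOn (fun n z => ∫ θ, lPn μ W T α n z θ ∂ν)
      (fun z => ∫ θ, lP μ W T α z θ ∂ν) Filter.atTop {z : ℂ | 0 < z.re} := by
  rw [Metric.tendstoUniformlyOn_iff]
  intro ε hε
  have h1 := lBad_tendsto_zero ν hTmeas hfin
  have h2 : ∀ᶠ n in Filter.atTop, 2 * (ν (lBad T n)).toReal < ε := by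
    have := h1.const_mul (2:ℝ)
    rw [mul_zero] at this
    exact this.eventually_lt_const hε
  filter_upwards [h2] with n hn z hz
  rw [dist_eq_norm]
  calc ‖(∫ θ, lP μ W T α z θ ∂ν) - ∫ θ, lPn μ W T α n z θ ∂ν‖
      ≤ 2 * (ν (lBad T n)).toReal :=
        lG_sub_lGn_norm_le μ ν hWmeas hWnonneg hTmeas hTnonneg hα0 hfin n (le_of_lt hz)
    _ < ε := hn

lemma lG_differentiableOn (hWmeas : Measurable W) (hWnonneg : ∀ ω, 0 ≤ W ω)
    (hTmeas : ∀ j, Measurable (T j)) (hTnonneg : ∀ j θ, 0 ≤ T j θ) (hα0 : 0 < α)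
    (hfin : ∀ᵐ θ ∂ν, {j | 0 < T j θ}.Finite) :
    DifferentiableOn ℂ (fun z => ∫ θ, lP μ W T α z θ ∂ν) {z : ℂ | 0 < z.re} := by
  apply TendstoLocallyUniformlyOn.differentiableOn
    (lG_tendstoUniformlyOn μ ν hWmeas hWnonneg hTmeas hTnonneg hα0 hfin).tendstoLocallyUniformlyOn
  · apply Filter.Eventually.of_forall
    intro n z hz
    exact ((lGn_hasDerivAt μ ν hWmeas hWnonneg hTmeas hTnonneg hα0 n
      hz).differentiableAt).differentiableWithinAt
  · exact isOpen_lt continuous_const Complex.continuous_re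

end key3

section key4
variable {Ω : Type*} [MeasurableSpace Ω] (μ : Measure Ω) [IsProbabilityMeasure μ]
  {Θ : Type*} [MeasurableSpace Θ] (ν : Measure Θ) [IsProbabilityMeasure ν]
  {W : Ω → ℝ} {T : ℕ → Θ → ℝ} {α : ℝ}

lemma lP_ofReal (hTnonneg : ∀ j θ, 0 ≤ T j θ) (hα0 : 0 < α) {θ : Θ}
    (hθ : {j | 0 < T j θ}.Finite) (s : ℝ) :
    lP μ W T α (s : ℂ) θ
      = ((∏' j : ℕ, (∫ ω, Real.exp (-((T j θ) ^ α * s * W ω)) ∂μ) : ℝ) : ℂ) := by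
  have hfac : ∀ j, lfac μ W T α (s : ℂ) θ j
      = ((∫ ω, Real.exp (-((T j θ) ^ α * s * W ω)) ∂μ : ℝ) : ℂ) := by
    intro j
    rw [lfac, ← Complex.ofReal_mul, lapl_ofReal]
  have hR : (∏' j : ℕ, (∫ ω, Real.exp (-((T j θ) ^ α * s * W ω)) ∂μ) : ℝ)
      = ∏ j ∈ hθ.toFinset, (∫ ω, Real.exp (-((T j θ) ^ α * s * W ω)) ∂μ) := by
    apply tprod_eq_prod
    intro j hj
    rw [Set.Finite.mem_toFinset] at hj
    have h0 : T j θ = 0 := le_antisymm (not_lt.1 hj) (hTnonneg j θ)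
    rw [h0, Real.zero_rpow hα0.ne']
    simp
  rw [lP_eq_prod μ hTnonneg hα0 hθ, hR, Complex.ofReal_prod]
  exact Finset.prod_congr rfl fun j _ => hfac j

lemma lapl_eq_int_lP_real (hWmeas : Measurable W) (hWnonneg : ∀ ω, 0 ≤ W ω)
    (hTnonneg : ∀ j θ, 0 ≤ T j θ) (hα0 : 0 < α)
    (hfin : ∀ᵐ θ ∂ν, {j | 0 < T j θ}.Finite)
    (hWfix : ∀ s : ℝ, 0 ≤ s →
      (∫ ω, Real.exp (-(s * W ω)) ∂μ)
        = ∫ θ, ∏' j : ℕ, (∫ ω, Real.exp (-((T j θ) ^ α * s * W ω)) ∂μ) ∂ν)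
    {s : ℝ} (hs : 0 ≤ s) :
    lapl μ W (s : ℂ) = ∫ θ, lP μ W T α (s : ℂ) θ ∂ν := by
  have h1 : ∫ θ, lP μ W T α (s : ℂ) θ ∂ν
      = ∫ θ, ((∏' j : ℕ, (∫ ω, Real.exp (-((T j θ) ^ α * s * W ω)) ∂μ) : ℝ) : ℂ) ∂ν := by
    apply integral_congr_ae
    filter_upwards [hfin] with θ hθ using lP_ofReal μ hTnonneg hα0 hθ s
  calc lapl μ W (s:ℂ) = ((∫ ω, Real.exp (-(s * W ω)) ∂μ : ℝ) : ℂ) := lapl_ofReal μ s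
    _ = ((∫ θ, ∏' j : ℕ, (∫ ω, Real.exp (-((T j θ) ^ α * s * W ω)) ∂μ) ∂ν : ℝ) : ℂ) := by
        rw [hWfix s hs]
    _ = ∫ θ, ((∏' j : ℕ, (∫ ω, Real.exp (-((T j θ) ^ α * s * W ω)) ∂μ) : ℝ) : ℂ) ∂ν :=
        integral_ofReal.symm
    _ = ∫ θ, lP μ W T α (s : ℂ) θ ∂ν := h1.symm

lemma lapl_fixed_point_complex (hWmeas : Measurable W) (hWnonneg : ∀ ω, 0 ≤ W ω)
    (hTmeas : ∀ j, Measurable (T j)) (hTnonneg : ∀ j θ, 0 ≤ T j θ) (hα0 : 0 < α)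
    (hfin : ∀ᵐ θ ∂ν, {j | 0 < T j θ}.Finite)
    (hWfix : ∀ s : ℝ, 0 ≤ s →
      (∫ ω, Real.exp (-(s * W ω)) ∂μ)
        = ∫ θ, ∏' j : ℕ, (∫ ω, Real.exp (-((T j θ) ^ α * s * W ω)) ∂μ) ∂ν)
    {z : ℂ} (hz : 0 < z.re) :
    lapl μ W z = ∫ θ, lP μ W T α z θ ∂ν := by
  set U : Set ℂ := {z : ℂ | 0 < z.re} with hU
  have hUopen : IsOpen U := isOpen_lt continuous_const Complex.continuous_re
  have hUconn : IsPreconnected U := (convex_halfSpace_re_gt 0).isPreconnected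
  have hFdiff : DifferentiableOn ℂ (lapl μ W) U := fun x hx =>
    ((hasDerivAt_lapl μ hWmeas hWnonneg hx).differentiableAt).differentiableWithinAt
  have hGdiff : DifferentiableOn ℂ (fun z => ∫ θ, lP μ W T α z θ ∂ν) U :=
    lG_differentiableOn μ ν hWmeas hWnonneg hTmeas hTnonneg hα0 hfin
  have hFan : AnalyticOnNhd ℂ (lapl μ W) U := hFdiff.analyticOnNhd hUopen
  have hGan : AnalyticOnNhd ℂ (fun z => ∫ θ, lP μ W T α z θ ∂ν) U := hGdiff.analyticOnNhd hUopen
  have h1U : (1 : ℂ) ∈ U := by simp [hU]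
  -- the two functions agree on a sequence of real points converging to 1
  have hfreq : ∃ᶠ x in nhdsWithin (1:ℂ) {(1:ℂ)}ᶜ,
      lapl μ W x = ∫ θ, lP μ W T α x θ ∂ν := by
    have hseq : Filter.Tendsto (fun n : ℕ => ((1 + ((n:ℝ)+1)⁻¹ : ℝ) : ℂ)) Filter.atTop
        (nhdsWithin (1:ℂ) {(1:ℂ)}ᶜ) := by
      apply tendsto_nhdsWithin_of_tendsto_nhds_of_eventually_within
      · have hr : Filter.Tendsto (fun n : ℕ => (1 + ((n:ℝ)+1)⁻¹ : ℝ)) Filter.atTop (nhds 1) := by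
          have := tendsto_one_div_add_atTop_nhds_zero_nat (𝕜 := ℝ)
          simp only [one_div] at this
          simpa using (tendsto_const_nhds (x := (1:ℝ))).add this
        have h2 : Filter.Tendsto (fun n : ℕ => ((1 + ((n:ℝ)+1)⁻¹ : ℝ) : ℂ)) Filter.atTop
            (nhds ((1:ℝ):ℂ)) := (Complex.continuous_ofReal.tendsto (1:ℝ)).comp hr
        rw [Complex.ofReal_one] at h2
        exact h2
      · apply Filter.Eventually.of_forall
        intro n
        simp only [Set.mem_compl_iff, Set.mem_singleton_iff]
        intro h
        have h2 : (1 + ((n:ℝ)+1)⁻¹ : ℝ) = 1 := by exact_mod_cast h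
        have h3 : (0:ℝ) < ((n:ℝ)+1)⁻¹ := by positivity
        linarith
    apply hseq.frequently
    apply Filter.Frequently.of_forall
    intro n
    exact lapl_eq_int_lP_real μ ν hWmeas hWnonneg hTnonneg hα0 hfin hWfix
      (by positivity : (0:ℝ) ≤ 1 + ((n:ℝ)+1)⁻¹)
  exact hFan.eqOn_of_preconnected_of_frequently_eq hGan hUconn h1U hfreq hz

end key4

section stable
variable {Ω : Type*} [MeasurableSpace Ω] (μ : Measure Ω) [IsProbabilityMeasure μ]

/-- the complex "Laplace exponent" of the stable law at `t` -/
noncomputable def cstable (σ β α : ℝ) (t : ℝ) : ℂ :=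
  Complex.ofReal (σ ^ α * |t| ^ α)
    * (1 - Complex.I * β * Real.sign t * Real.tan (Real.pi * α / 2))

lemma sign_mul_of_pos {r : ℝ} (hr : 0 < r) (t : ℝ) : Real.sign (t * r) = Real.sign t := by
  rcases lt_trichotomy t 0 with h | h | h
  · rw [Real.sign_of_neg (mul_neg_of_neg_of_pos h hr), Real.sign_of_neg h]
  · rw [h, zero_mul]
  · rw [Real.sign_of_pos (mul_pos h hr), Real.sign_of_pos h]

lemma cstable_scale {σ β α : ℝ} (hα0 : 0 < α) (t r : ℝ) (hr : 0 ≤ r) :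
    cstable σ β α (t * r) = Complex.ofReal (r ^ α) * cstable σ β α t := by
  rcases eq_or_lt_of_le hr with h0 | hpos
  · rw [← h0, mul_zero]
    simp [cstable, Real.zero_rpow hα0.ne']
  · rw [cstable, cstable, sign_mul_of_pos hpos, abs_mul, _root_.abs_of_pos hpos,
      Real.mul_rpow (abs_nonneg t) hpos.le]
    push_cast
    ring

lemma re_mul_one_sub_I_mul (A c : ℝ) :
    ((A : ℂ) * (1 - Complex.I * c)).re = A := by
  simp [Complex.mul_re, Complex.mul_im]

lemma cstable_re (σ β α t : ℝ) : (cstable σ β α t).re = σ ^ α * |t| ^ α := by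
  have h : cstable σ β α t = Complex.ofReal (σ ^ α * |t| ^ α)
      * (1 - Complex.I * ((β * Real.sign t * Real.tan (Real.pi * α / 2) : ℝ) : ℂ)) := by
    rw [cstable]; push_cast; ring
  rw [h, re_mul_one_sub_I_mul]

lemma norm_exp_I_mul (t r : ℝ) : ‖Complex.exp (Complex.I * t * r)‖ = 1 := by
  rw [Complex.norm_exp]
  have : (Complex.I * t * r).re = 0 := by simp [Complex.mul_re]
  rw [this, Real.exp_zero]

lemma phi_eq_lapl {W Y : Ω → ℝ} (hWmeas : Measurable W) (hYmeas : Measurable Y)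
    (hWnonneg : ∀ ω, 0 ≤ W ω) (hindep : IndepFun W Y μ)
    {α σ β : ℝ} (hα0 : 0 < α)
    (hY : ∀ t : ℝ, (∫ ω, Complex.exp (Complex.I * t * Y ω) ∂μ)
      = Complex.exp (-(Complex.ofReal (σ ^ α * |t| ^ α))
          * (1 - Complex.I * β * Real.sign t * Real.tan (Real.pi * α / 2))))
    (t : ℝ) :
    (∫ ω, Complex.exp (Complex.I * t * Complex.ofReal (W ω ^ (1 / α) * Y ω)) ∂μ)
      = lapl μ W (cstable σ β α t) := by
  have hfmeas : Measurable fun p : ℝ × ℝ =>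
      Complex.exp (Complex.I * t * Complex.ofReal (p.1 ^ (1/α) * p.2)) := by
    apply Complex.measurable_exp.comp
    exact (measurable_const.mul (Complex.measurable_ofReal.comp
      ((measurable_fst.pow_const (1/α)).mul measurable_snd)))
  have hmap : μ.map (fun ω => (W ω, Y ω)) = (μ.map W).prod (μ.map Y) :=
    (indepFun_iff_map_prod_eq_prod_map_map hWmeas.aemeasurable hYmeas.aemeasurable).1 hindep
  have hpairmeas : Measurable fun ω => (W ω, Y ω) := hWmeas.prodMk hYmeas
  have h1 : (∫ ω, Complex.exp (Complex.I * t * Complex.ofReal (W ω ^ (1 / α) * Y ω)) ∂μ)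
      = ∫ p : ℝ × ℝ, Complex.exp (Complex.I * t * Complex.ofReal (p.1 ^ (1/α) * p.2))
          ∂(μ.map (fun ω => (W ω, Y ω))) := by
    rw [integral_map hpairmeas.aemeasurable hfmeas.aestronglyMeasurable]
  have hprob : IsProbabilityMeasure ((μ.map W).prod (μ.map Y)) := by
    have h1 : IsProbabilityMeasure (μ.map W) := Measure.isProbabilityMeasure_map hWmeas.aemeasurable
    have h2 : IsProbabilityMeasure (μ.map Y) := Measure.isProbabilityMeasure_map hYmeas.aemeasurable
    infer_instance
  have hfint : Integrable (fun p : ℝ × ℝ =>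
      Complex.exp (Complex.I * t * Complex.ofReal (p.1 ^ (1/α) * p.2)))
      ((μ.map W).prod (μ.map Y)) := by
    apply Integrable.mono' (integrable_const (1:ℝ)) hfmeas.aestronglyMeasurable
    exact Filter.Eventually.of_forall fun p => le_of_eq (norm_exp_I_mul t _)
  have h2 : ∫ p : ℝ × ℝ, Complex.exp (Complex.I * t * Complex.ofReal (p.1 ^ (1/α) * p.2))
        ∂((μ.map W).prod (μ.map Y))
      = ∫ w, ∫ y, Complex.exp (Complex.I * t * Complex.ofReal (w ^ (1/α) * y))
          ∂(μ.map Y) ∂(μ.map W) := integral_prod _ hfint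
  have hgmeas : StronglyMeasurable fun w : ℝ =>
      ∫ y, Complex.exp (Complex.I * t * Complex.ofReal (w ^ (1/α) * y)) ∂(μ.map Y) :=
    hfmeas.stronglyMeasurable.integral_prod_right'
  have h3 : ∫ w, (∫ y, Complex.exp (Complex.I * t * Complex.ofReal (w ^ (1/α) * y))
        ∂(μ.map Y)) ∂(μ.map W)
      = ∫ ω, (∫ y, Complex.exp (Complex.I * t * Complex.ofReal ((W ω) ^ (1/α) * y))
        ∂(μ.map Y)) ∂μ := by
    rw [integral_map hWmeas.aemeasurable hgmeas.aestronglyMeasurable]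
  have h4 : ∀ w : ℝ, 0 ≤ w →
      (∫ y, Complex.exp (Complex.I * t * Complex.ofReal (w ^ (1/α) * y)) ∂(μ.map Y))
        = Complex.exp (-(cstable σ β α t * w)) := by
    intro w hw
    have hmeas2 : Measurable fun y : ℝ =>
        Complex.exp (Complex.I * ((t * w ^ (1/α) : ℝ) : ℂ) * ((y : ℝ) : ℂ)) :=
      Complex.measurable_exp.comp (measurable_const.mul
        (Complex.measurable_ofReal.comp measurable_id))
    have e1 : (∫ y, Complex.exp (Complex.I * t * Complex.ofReal (w ^ (1/α) * y)) ∂(μ.map Y))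
        = ∫ y, Complex.exp
          (Complex.I * ((t * w ^ (1/α) : ℝ) : ℂ) * ((y : ℝ) : ℂ)) ∂(μ.map Y) := by
      apply integral_congr_ae
      apply Filter.Eventually.of_forall
      intro y
      exact congrArg Complex.exp (by rw [Complex.ofReal_mul, Complex.ofReal_mul]; ring)
    have e2 : (∫ y, Complex.exp
          (Complex.I * ((t * w ^ (1/α) : ℝ) : ℂ) * ((y : ℝ) : ℂ)) ∂(μ.map Y))
        = ∫ ω, Complex.exp (Complex.I * ((t * w ^ (1/α) : ℝ) : ℂ) * ((Y ω : ℝ) : ℂ)) ∂μ := by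
      rw [integral_map hYmeas.aemeasurable hmeas2.aestronglyMeasurable]
    rw [e1, e2, hY (t * w ^ (1/α))]
    have hsc : cstable σ β α (t * w ^ (1/α)) = Complex.ofReal w * cstable σ β α t := by
      have h5 : (w ^ (1/α) : ℝ) ^ α = w := by
        rw [← Real.rpow_mul hw, one_div, inv_mul_cancel₀ hα0.ne', Real.rpow_one]
      rw [cstable_scale hα0 t _ (Real.rpow_nonneg hw _), h5]
    have e3 : -(Complex.ofReal (σ ^ α * |t * w ^ (1/α)| ^ α))
        * (1 - Complex.I * β * Real.sign (t * w ^ (1/α)) * Real.tan (Real.pi * α / 2))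
        = -(cstable σ β α (t * w ^ (1/α))) := by
      rw [cstable]; ring
    rw [e3, hsc]
    ring_nf
  have h5 : ∫ ω, (∫ y, Complex.exp (Complex.I * t * Complex.ofReal ((W ω) ^ (1/α) * y))
        ∂(μ.map Y)) ∂μ = lapl μ W (cstable σ β α t) := by
    rw [lapl]
    apply integral_congr_ae
    apply Filter.Eventually.of_forall
    intro ω
    exact h4 (W ω) (hWnonneg ω)
  rw [h1, hmap, h2, h3, h5]

end stable

/-- if `W ≥ 0` solves `W ≜ ∑_j T_j^α W_j` and `Y ~ S_α(σ,β,0)` is independent of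
`W`, then the law of `X = W^{1/α} Y` is a fixed point of the smoothing transform associated
with `T`: its characteristic function `φ` satisfies `φ(t) = E[∏_j φ(T_j t)]`. -/
theorem stable_mixture_solves_smoothing_fixed_point
    {Ω : Type*} {mΩ : MeasurableSpace Ω} (μ : Measure Ω) [IsProbabilityMeasure μ]
    {Θ : Type*} {mΘ : MeasurableSpace Θ} (ν : Measure Θ) [IsProbabilityMeasure ν]
    (T : ℕ → Θ → ℝ) (hTmeas : ∀ j, Measurable (T j)) (hTnonneg : ∀ j θ, 0 ≤ T j θ)
    (hfin : ∀ᵐ θ ∂ν, {j | 0 < T j θ}.Finite)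
    (W Y : Ω → ℝ) (hWmeas : Measurable W) (hYmeas : Measurable Y)
    (hWnonneg : ∀ ω, 0 ≤ W ω) (hindep : IndepFun W Y μ)
    (α σ β : ℝ) (hα : α ∈ Set.Ioo (0 : ℝ) 2) (hα1 : α ≠ 1)
    (hσ : 0 ≤ σ) (hβ : β ∈ Set.Icc (-1 : ℝ) 1)
    -- `W` solves the fixed-point equation `W ≜ ∑_j T_j^α W_j`, in Laplace-transform form:
    (hWfix : ∀ s : ℝ, 0 ≤ s →
      (∫ ω, Real.exp (-(s * W ω)) ∂μ)
        = ∫ θ, ∏' j : ℕ, (∫ ω, Real.exp (-((T j θ) ^ α * s * W ω)) ∂μ) ∂ν)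
    -- `Y` is strictly `α`-stable with parameters `(σ, β, 0)`:
    (hY : ∀ t : ℝ, (∫ ω, Complex.exp (Complex.I * t * Y ω) ∂μ)
      = Complex.exp (-(Complex.ofReal (σ ^ α * |t| ^ α))
          * (1 - Complex.I * β * Real.sign t * Real.tan (Real.pi * α / 2))))
    (φ : ℝ → ℂ)
    (hφ : ∀ t : ℝ, φ t = ∫ ω, Complex.exp (Complex.I * t
        * Complex.ofReal (W ω ^ (1 / α) * Y ω)) ∂μ) :
    ∀ t : ℝ, φ t = ∫ θ, ∏' j : ℕ, φ (T j θ * t) ∂ν := by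
  intro t
  have hα0 : 0 < α := hα.1
  have hphi : ∀ u : ℝ, φ u = lapl μ W (cstable σ β α u) := by
    intro u
    rw [hφ u]
    exact phi_eq_lapl μ hWmeas hYmeas hWnonneg hindep hα0 hY u
  have hfac : ∀ (θ : Θ) (j : ℕ),
      φ (T j θ * t) = lapl μ W (((T j θ ^ α : ℝ) : ℂ) * cstable σ β α t) := by
    intro θ j
    rw [hphi (T j θ * t)]
    have h : cstable σ β α (T j θ * t) = ((T j θ ^ α : ℝ) : ℂ) * cstable σ β α t := by
      rw [mul_comm (T j θ) t, cstable_scale hα0 t _ (hTnonneg j θ)]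
    rw [h]
  have hrw : (∫ θ, ∏' j : ℕ, φ (T j θ * t) ∂ν)
      = ∫ θ, ∏' j : ℕ, lapl μ W (((T j θ ^ α : ℝ) : ℂ) * cstable σ β α t) ∂ν := by
    apply integral_congr_ae
    apply Filter.Eventually.of_forall
    intro θ
    exact tprod_congr fun j => hfac θ j
  rw [hphi t, hrw]
  by_cases hA : σ ^ α * |t| ^ α = 0
  · have hc0 : cstable σ β α t = 0 := by rw [cstable, hA]; simp
    rw [hc0]
    simp only [mul_zero, lapl_zero, tprod_one]
    simp
  · have hApos : 0 < σ ^ α * |t| ^ α := by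
      apply lt_of_le_of_ne _ (Ne.symm hA)
      exact mul_nonneg (Real.rpow_nonneg hσ α) (Real.rpow_nonneg (abs_nonneg t) α)
    have hre : 0 < (cstable σ β α t).re := by rw [cstable_re]; exact hApos
    have := lapl_fixed_point_complex μ ν hWmeas hWnonneg hTmeas hTnonneg hα0 hfin hWfix hre
    simpa only [lP, lfac] using this
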